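/- Let q ≥ 3 and let ∇ ∈ ℝ^{p×n} be the discrete gradient operator of the 2-dimensional regular grid graph on V = {0,…,q−1}², so n = q² and p = 2q(q−1). Then for every integer ℓ with 4 < ℓ ≤ p, κ_∇(ℓ) ≤ n − (1/2)(ℓ + √(1 + 2ℓ)) + 1/2. -/

import Mathlib

/-- Base-`q` encoding of a grid point, used to orient the edges of the grid graph. -/
def enc (q d : ℕ) (v : Fin d → Fin q) : ℕ := ∑ i : Fin d, q ^ (i : ℕ) * (v i : ℕ)

/-- The (oriented) edges of the regular grid graph on `{0,…,q−1}^d`: pairs of vertices at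
ℓ1-distance 1, canonically oriented. They index the rows of the discrete gradient. -/
abbrev OEdge (q d : ℕ) : Type :=
  {e : (Fin d → Fin q) × (Fin d → Fin q) //
    (∑ i, |(e.1 i : ℤ) - (e.2 i : ℤ)|) = 1 ∧ enc q d e.1 < enc q d e.2}

/-- The discrete gradient operator of the regular grid graph: one row per edge
`e = (v₁, v₂)`, with entry `−1` in the column of `v₁`, `+1` in the column of `v₂`. -/
def grad (q d : ℕ) : Matrix (OEdge q d) (Fin d → Fin q) ℝ :=
  Matrix.of fun e v => if v = e.1.2 then 1 else if v = e.1.1 then -1 else 0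

/-- `W_Λ`: the nullspace of the rows of the discrete gradient indexed by `Λ`. -/
noncomputable def Wgrad (q d : ℕ) (Λ : Finset (OEdge q d)) :
    Submodule ℝ ((Fin d → Fin q) → ℝ) :=
  ⨅ e ∈ Λ, LinearMap.ker
    ((LinearMap.proj e : (OEdge q d → ℝ) →ₗ[ℝ] ℝ) ∘ₗ (grad q d).mulVecLin)

/-- `κ_∇(ℓ) = max{dim W_Λ : Λ ⊆ E, |Λ| ≥ ℓ}` for the discrete gradient of the grid. -/
noncomputable def kappaGrad (q d ℓ : ℕ) : ℕ :=
  (Finset.univ.filter (fun Λ : Finset (OEdge q d) => ℓ ≤ Λ.card)).sup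
    (fun Λ => Module.finrank ℝ (Wgrad q d Λ))


lemma oedge_ne {q d : ℕ} (e : OEdge q d) : e.1.1 ≠ e.1.2 := by
  intro h
  have := e.2.2
  rw [h] at this
  exact lt_irrefl _ this

lemma mem_Wgrad {q d : ℕ} (Λ : Finset (OEdge q d)) (x : (Fin d → Fin q) → ℝ) :
    x ∈ Wgrad q d Λ ↔ ∀ e ∈ Λ, x e.1.2 = x e.1.1 := by
  simp only [Wgrad, Submodule.mem_iInf, LinearMap.mem_ker, LinearMap.comp_apply,
    LinearMap.proj_apply, Matrix.mulVecLin_apply]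
  refine forall₂_congr fun e he => ?_
  have hne := oedge_ne e
  have : (grad q d).mulVec x e = x e.1.2 - x e.1.1 := by
    simp only [Matrix.mulVec, dotProduct, grad, Matrix.of_apply]
    have hptw : ∀ v, (if v = e.1.2 then (1:ℝ) else if v = e.1.1 then -1 else 0) * x v
        = (if v = e.1.2 then x v else 0) + (if v = e.1.1 then -(x v) else 0) := by
      intro v
      rcases eq_or_ne v e.1.2 with h2 | h2
      · subst h2
        rw [if_pos rfl, if_pos rfl, if_neg (Ne.symm hne), one_mul, add_zero]
      · rcases eq_or_ne v e.1.1 with h1 | h1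
        · subst h1
          rw [if_neg h2, if_neg h2, if_pos rfl, if_pos rfl, zero_add, neg_one_mul]
        · rw [if_neg h2, if_neg h2, if_neg h1, if_neg h1, zero_mul, add_zero]
    rw [Finset.sum_congr rfl fun v _ => hptw v, Finset.sum_add_distrib]
    simp only [Finset.sum_ite_eq' Finset.univ e.1.2, Finset.sum_ite_eq' Finset.univ e.1.1,
      Finset.mem_univ, if_pos]
    ring
  rw [this, sub_eq_zero]

lemma fin2_eq_of {α : Type*} {v w : Fin 2 → α} (h0 : v 0 = w 0) (h1 : v 1 = w 1) : v = w := by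
  funext i; fin_cases i <;> assumption

lemma enc_two {q : ℕ} (v : Fin 2 → Fin q) : enc q 2 v = (v 0 : ℕ) + q * (v 1 : ℕ) := by
  simp [enc, Fin.sum_univ_two]

/-- classification of 2D edges: horizontal (moves in coord 0) or vertical (moves in coord 1) -/
lemma edge_cases {q : ℕ} (e : OEdge q 2) :
    (e.1.1 1 = e.1.2 1 ∧ ((e.1.2 0 : ℕ) = (e.1.1 0 : ℕ) + 1)) ∨
    (e.1.1 0 = e.1.2 0 ∧ ((e.1.2 1 : ℕ) = (e.1.1 1 : ℕ) + 1)) := by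
  obtain ⟨⟨a, b⟩, habs, henc⟩ := e
  simp only at habs henc ⊢
  rw [Fin.sum_univ_two] at habs
  rw [enc_two, enc_two] at henc
  have h0 := abs_nonneg ((a 0 : ℤ) - (b 0 : ℤ))
  have h1 := abs_nonneg ((a 1 : ℤ) - (b 1 : ℤ))
  have hcase : (|(a 0 : ℤ) - (b 0 : ℤ)| = 0 ∧ |(a 1 : ℤ) - (b 1 : ℤ)| = 1) ∨
      (|(a 0 : ℤ) - (b 0 : ℤ)| = 1 ∧ |(a 1 : ℤ) - (b 1 : ℤ)| = 0) := by omega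
  rcases hcase with ⟨hA, hB⟩ | ⟨hA, hB⟩
  · right
    have ha : (a 0 : ℤ) = (b 0 : ℤ) := by have := abs_eq_zero.mp hA; omega
    have ha' : a 0 = b 0 := by
      apply Fin.ext; exact_mod_cast ha
    refine ⟨ha', ?_⟩
    have h2 : (a 0 : ℕ) = (b 0 : ℕ) := by exact_mod_cast ha
    have hq1 : (a 1 : ℕ) < (b 1 : ℕ) := by
      have hmul : q * (a 1 : ℕ) < q * (b 1 : ℕ) := by omega
      exact Nat.lt_of_mul_lt_mul_left hmul
    rcases abs_eq (by norm_num : (0:ℤ) ≤ 1) |>.mp hB with h | h <;> omega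
  · left
    have hb : (a 1 : ℤ) = (b 1 : ℤ) := by have := abs_eq_zero.mp hB; omega
    have hb' : a 1 = b 1 := by apply Fin.ext; exact_mod_cast hb
    refine ⟨hb', ?_⟩
    have h2 : (a 1 : ℕ) = (b 1 : ℕ) := by exact_mod_cast hb
    have h2' : q * (a 1 : ℕ) = q * (b 1 : ℕ) := by rw [h2]
    have hq1 : (a 0 : ℕ) < (b 0 : ℕ) := by omega
    rcases abs_eq (by norm_num : (0:ℤ) ≤ 1) |>.mp hA with h | h <;> omega

/-- The simple graph on the grid vertices with edge set `Λ`. -/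
def Gr (q : ℕ) (Λ : Finset (OEdge q 2)) : SimpleGraph (Fin 2 → Fin q) where
  Adj v w := ∃ e ∈ Λ, ((e : (Fin 2 → Fin q) × (Fin 2 → Fin q)).1 = v ∧ e.1.2 = w) ∨
    (e.1.1 = w ∧ e.1.2 = v)
  symm := by
    refine ⟨?_⟩
    intro v w ⟨e, he, h⟩
    exact ⟨e, he, h.symm.imp id id⟩
  loopless := by
    refine ⟨?_⟩
    intro v ⟨e, he, h⟩
    rcases h with ⟨h1, h2⟩ | ⟨h1, h2⟩ <;> exact oedge_ne e (h1.trans h2.symm)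

lemma apply_eq_of_reachable {q : ℕ} {Λ : Finset (OEdge q 2)} {f : (Fin 2 → Fin q) → ℝ}
    (hf : ∀ v w, (Gr q Λ).Adj v w → f v = f w) {v w : Fin 2 → Fin q}
    (h : (Gr q Λ).Reachable v w) : f v = f w := by
  obtain ⟨p⟩ := h
  induction p with
  | nil => rfl
  | cons h p ih => exact (hf _ _ h).trans ih

lemma adj_apply_eq {q : ℕ} {Λ : Finset (OEdge q 2)} {x : (Fin 2 → Fin q) → ℝ}
    (hx : x ∈ Wgrad q 2 Λ) : ∀ v w, (Gr q Λ).Adj v w → x v = x w := by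
  intro v w ⟨e, he, h⟩
  have := (mem_Wgrad Λ x).mp hx e he
  rcases h with ⟨h1, h2⟩ | ⟨h1, h2⟩
  · rw [← h1, ← h2]; exact this.symm
  · rw [← h1, ← h2]; exact this

noncomputable def compEquiv (q : ℕ) (Λ : Finset (OEdge q 2)) :
    Wgrad q 2 Λ ≃ₗ[ℝ] ((Gr q Λ).ConnectedComponent → ℝ) where
  toFun x := fun c => SimpleGraph.ConnectedComponent.lift (x : (Fin 2 → Fin q) → ℝ)
    (fun v w p _ => apply_eq_of_reachable (adj_apply_eq x.2) ⟨p⟩) c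
  map_add' x y := by
    funext c
    induction c using SimpleGraph.ConnectedComponent.ind
    rfl
  map_smul' r x := by
    funext c
    induction c using SimpleGraph.ConnectedComponent.ind
    rfl
  invFun y := ⟨fun v => y ((Gr q Λ).connectedComponentMk v), by
    rw [mem_Wgrad]
    intro e he
    have : (Gr q Λ).Adj e.1.1 e.1.2 := ⟨e, he, Or.inl ⟨rfl, rfl⟩⟩
    rw [SimpleGraph.ConnectedComponent.sound this.reachable]⟩
  left_inv x := rfl
  right_inv y := by
    funext c
    induction c using SimpleGraph.ConnectedComponent.ind
    rfl

lemma finrank_Wgrad (q : ℕ) (Λ : Finset (OEdge q 2)) :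
    Module.finrank ℝ (Wgrad q 2 Λ) = Nat.card (Gr q Λ).ConnectedComponent := by
  haveI : Fintype (Gr q Λ).ConnectedComponent := Fintype.ofFinite _
  rw [(compEquiv q Λ).finrank_eq, Module.finrank_fintype_fun_eq_card,
    Nat.card_eq_fintype_card]

lemma fin2_cases (i j k : Fin 2) (hij : i ≠ j) : k = i ∨ k = j := by
  have h1 := i.isLt; have h2 := j.isLt; have h3 := k.isLt
  have hne : (i : ℕ) ≠ (j : ℕ) := Fin.val_ne_of_ne hij
  have : (k : ℕ) = (i : ℕ) ∨ (k : ℕ) = (j : ℕ) := by omega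
  rcases this with h | h
  · exact Or.inl (Fin.ext h)
  · exact Or.inr (Fin.ext h)

/-- the set of `i`-coordinates of vertices of `S` on the `j`-line `y`. -/
def Tset {q : ℕ} (S : Finset (Fin 2 → Fin q)) (i j : Fin 2) (y : Fin q) : Finset (Fin q) :=
  (S.filter (fun v => v j = y)).image (fun v => v i)

noncomputable def mvert {q : ℕ} (S : Finset (Fin 2 → Fin q)) (i j : Fin 2) (y : Fin q) :
    Fin 2 → Fin q :=
  if h : (Tset S i j y).Nonempty then (fun k => if k = j then y else (Tset S i j y).min' h)
  else (fun _ => y)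

/-- Counting edges moving in direction `i` inside a vertex set `S`:
their number plus the number of occupied `j`-lines is at most `|S|`. -/
lemma dir_count {q : ℕ} (E : Finset (OEdge q 2)) (S : Finset (Fin 2 → Fin q))
    (i j : Fin 2) (hij : i ≠ j)
    (hE : ∀ e ∈ E, (e : (Fin 2 → Fin q) × (Fin 2 → Fin q)).1 ∈ S ∧ e.1.2 ∈ S ∧
      e.1.1 j = e.1.2 j ∧ ((e.1.2 i : ℕ) = (e.1.1 i : ℕ) + 1)) :
    E.card + (S.image (fun v => v j)).card ≤ S.card := by
  classical
  have hTne : ∀ y ∈ S.image (fun v => v j), (Tset S i j y).Nonempty := by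
    intro y hy
    obtain ⟨v, hv, rfl⟩ := Finset.mem_image.mp hy
    exact ⟨v i, Finset.mem_image.mpr ⟨v, Finset.mem_filter.mpr ⟨hv, rfl⟩, rfl⟩⟩
  have hmj : ∀ y ∈ S.image (fun v => v j), (mvert S i j y) j = y := by
    intro y hy
    simp [mvert, dif_pos (hTne y hy)]
  have hmi : ∀ y (hy : y ∈ S.image (fun v => v j)),
      (mvert S i j y) i = (Tset S i j y).min' (hTne y hy) := by
    intro y hy
    simp only [mvert, dif_pos (hTne y hy), if_neg hij]
  have hmS : ∀ y ∈ S.image (fun v => v j), mvert S i j y ∈ S := by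
    intro y hy
    have hmin := (Tset S i j y).min'_mem (hTne y hy)
    obtain ⟨u, hu, hui⟩ := Finset.mem_image.mp hmin
    have huS := (Finset.mem_filter.mp hu).1
    have huj := (Finset.mem_filter.mp hu).2
    have heq : mvert S i j y = u := by
      funext k
      rcases fin2_cases i j k hij with rfl | rfl
      · rw [hmi y hy, ← hui]
      · rw [hmj y hy, huj]
    rw [heq]; exact huS
  have hcardA : (E.image (fun e : OEdge q 2 => e.1.2)).card = E.card := by
    apply Finset.card_image_of_injOn
    intro e he f hf hef
    have hef' : (e : (Fin 2 → Fin q) × (Fin 2 → Fin q)).2 = f.1.2 := hef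
    obtain ⟨-, -, hej, hei⟩ := hE e he
    obtain ⟨-, -, hfj, hfi⟩ := hE f hf
    have h1 : (e : (Fin 2 → Fin q) × (Fin 2 → Fin q)).1 = f.1.1 := by
      funext k
      rcases fin2_cases i j k hij with rfl | rfl
      · apply Fin.ext
        have : (e.1.2 k : ℕ) = (f.1.2 k : ℕ) := by rw [hef']
        omega
      · rw [hej, hfj, hef']
    exact Subtype.ext (Prod.ext h1 hef')
  have hcardB : ((S.image (fun v => v j)).image (mvert S i j)).card
      = (S.image (fun v => v j)).card := by
    apply Finset.card_image_of_injOn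
    intro y hy z hz hyz
    have hyz' : mvert S i j y = mvert S i j z := hyz
    rw [← hmj y hy, ← hmj z hz, hyz']
  have hdisj : Disjoint (E.image (fun e : OEdge q 2 => e.1.2))
      ((S.image (fun v => v j)).image (mvert S i j)) := by
    rw [Finset.disjoint_left]
    rintro v hvA hvB
    obtain ⟨e, he, rfl⟩ := Finset.mem_image.mp hvA
    obtain ⟨y, hy, hmy⟩ := Finset.mem_image.mp hvB
    obtain ⟨h1S, h2S, hej, hei⟩ := hE e he
    have h1j : e.1.1 j = y := by rw [hej, ← hmy, hmj y hy]
    have h1T : e.1.1 i ∈ Tset S i j y :=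
      Finset.mem_image.mpr ⟨e.1.1, Finset.mem_filter.mpr ⟨h1S, h1j⟩, rfl⟩
    have hle : ((Tset S i j y).min' (hTne y hy) : ℕ) ≤ (e.1.1 i : ℕ) :=
      Finset.min'_le _ _ h1T
    have h2 : (e.1.2 i : ℕ) = ((Tset S i j y).min' (hTne y hy) : ℕ) := by
      rw [← hmi y hy, hmy]
    have hcon : (e.1.1 i : ℕ) + 1 ≤ (e.1.1 i : ℕ) := by
      rw [← hei, h2]; exact hle
    exact absurd hcon (Nat.not_succ_le_self _)
  have hsub : (E.image (fun e : OEdge q 2 => e.1.2))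
      ∪ ((S.image (fun v => v j)).image (mvert S i j)) ⊆ S := by
    intro v hv
    rcases Finset.mem_union.mp hv with h | h
    · obtain ⟨e, he, rfl⟩ := Finset.mem_image.mp h
      exact (hE e he).2.1
    · obtain ⟨y, hy, rfl⟩ := Finset.mem_image.mp h
      exact hmS y hy
  calc E.card + (S.image (fun v => v j)).card
      = (E.image (fun e : OEdge q 2 => e.1.2)).card
        + ((S.image (fun v => v j)).image (mvert S i j)).card := by rw [hcardA, hcardB]
    _ = ((E.image (fun e : OEdge q 2 => e.1.2))
        ∪ ((S.image (fun v => v j)).image (mvert S i j))).card :=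
        (Finset.card_union_of_disjoint hdisj).symm
    _ ≤ S.card := Finset.card_le_card hsub

lemma sqrt_pack (E R C s : ℝ) (hR : 1 ≤ R) (hC : 1 ≤ C) (hs : s ≤ R * C)
    (hE : E + R + C ≤ 2 * s) : E ≤ 2 * s - 2 * Real.sqrt s := by
  have h1 : Real.sqrt s ≤ Real.sqrt (R * C) := Real.sqrt_le_sqrt hs
  have h2 : Real.sqrt (R * C) ≤ (R + C) / 2 := by
    rw [show R * C = ((R + C) / 2) ^ 2 - ((R - C) / 2) ^ 2 by ring]
    calc Real.sqrt (((R + C) / 2) ^ 2 - ((R - C) / 2) ^ 2)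
        ≤ Real.sqrt (((R + C) / 2) ^ 2) := Real.sqrt_le_sqrt (by nlinarith [sq_nonneg ((R - C) / 2)])
      _ = (R + C) / 2 := Real.sqrt_sq (by linarith)
  linarith

lemma superadd (a b : ℝ) (ha : 1 ≤ a) (hb : 1 ≤ b) :
    (2 * a - 2 * Real.sqrt a) + (2 * b - 2 * Real.sqrt b) ≤
      2 * (a + b - 1) - 2 * Real.sqrt (a + b - 1) := by
  have hx : 1 ≤ Real.sqrt a := by
    rw [show (1:ℝ) = Real.sqrt 1 by simp]; exact Real.sqrt_le_sqrt ha
  have hy : 1 ≤ Real.sqrt b := by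
    rw [show (1:ℝ) = Real.sqrt 1 by simp]; exact Real.sqrt_le_sqrt hb
  have hxa : Real.sqrt a ^ 2 = a := Real.sq_sqrt (by linarith)
  have hyb : Real.sqrt b ^ 2 = b := Real.sq_sqrt (by linarith)
  have key : Real.sqrt (a + b - 1) ≤ Real.sqrt a + Real.sqrt b - 1 := by
    calc Real.sqrt (a + b - 1) ≤ Real.sqrt ((Real.sqrt a + Real.sqrt b - 1) ^ 2) := by
          apply Real.sqrt_le_sqrt
          nlinarith [mul_le_mul hx hy (by linarith) (by linarith)]
      _ = Real.sqrt a + Real.sqrt b - 1 := Real.sqrt_sq (by linarith)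
  linarith

lemma sum_superadd {ι : Type*} (s : Finset ι) (hs : s.Nonempty) (f : ι → ℕ)
    (hf : ∀ i ∈ s, 1 ≤ f i) :
    ∑ i ∈ s, (2 * (f i : ℝ) - 2 * Real.sqrt (f i)) ≤
      2 * ((∑ i ∈ s, (f i : ℝ)) - s.card + 1)
        - 2 * Real.sqrt ((∑ i ∈ s, (f i : ℝ)) - s.card + 1) := by
  induction hs using Finset.Nonempty.cons_induction with
  | singleton a => simp
  | cons a s ha hs ih =>
    have hfa : (1:ℝ) ≤ (f a : ℝ) := by exact_mod_cast hf a (Finset.mem_cons_self a s)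
    have hfs : ∀ i ∈ s, 1 ≤ f i := fun i hi => hf i (Finset.mem_cons.mpr (Or.inr hi))
    have ih' := ih hfs
    rw [Finset.sum_cons, Finset.sum_cons, Finset.card_cons]
    have hb1 : (1:ℝ) ≤ (∑ i ∈ s, (f i : ℝ)) - s.card + 1 := by
      have : (s.card : ℝ) ≤ ∑ i ∈ s, (f i : ℝ) := by
        calc (s.card : ℝ) = ∑ _i ∈ s, (1:ℝ) := by simp
          _ ≤ ∑ i ∈ s, (f i : ℝ) := Finset.sum_le_sum (fun i hi => by exact_mod_cast hfs i hi)
      linarith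
    calc (2 * (f a : ℝ) - 2 * Real.sqrt (f a)) + ∑ i ∈ s, (2 * (f i : ℝ) - 2 * Real.sqrt (f i))
        ≤ (2 * (f a : ℝ) - 2 * Real.sqrt (f a)) +
          (2 * ((∑ i ∈ s, (f i : ℝ)) - s.card + 1)
            - 2 * Real.sqrt ((∑ i ∈ s, (f i : ℝ)) - s.card + 1)) := by linarith
      _ ≤ _ := by
          have := superadd (f a) ((∑ i ∈ s, (f i : ℝ)) - s.card + 1) hfa hb1
          have harr : (f a : ℝ) + ((∑ i ∈ s, (f i : ℝ)) - s.card + 1) - 1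
              = (f a : ℝ) + (∑ i ∈ s, (f i : ℝ)) - (s.card + 1) + 1 := by
            push_cast; ring
          rw [harr] at this
          convert this using 3 <;> push_cast <;> ring
  
lemma final_alg (r l : ℝ) (hr : 0 ≤ r) (h : l ≤ 2 * (r + 1) - 2 * Real.sqrt (r + 1)) :
    (l + Real.sqrt (1 + 2 * l)) / 2 - 1 / 2 ≤ r := by
  set t := Real.sqrt (r + 1) with ht
  have ht1 : 1 ≤ t := by
    rw [ht]
    have := Real.sqrt_le_sqrt (show (1:ℝ) ≤ r + 1 by linarith)
    simpa using this
  have ht2 : t ^ 2 = r + 1 := Real.sq_sqrt (by linarith)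
  have hm : Real.sqrt (1 + 2 * l) ≤ 2 * t ^ 2 - 1 - l := by
    calc Real.sqrt (1 + 2 * l) ≤ Real.sqrt ((2 * t ^ 2 - 1 - l) ^ 2) := by
          apply Real.sqrt_le_sqrt
          nlinarith [sq_nonneg (2 * t - 1 - (2 * t ^ 2 - 1 - l))]
      _ = 2 * t ^ 2 - 1 - l := Real.sqrt_sq (by nlinarith)
  nlinarith

open scoped Classical in
lemma count_components (q : ℕ) (hq : 3 ≤ q) (Λ : Finset (OEdge q 2)) :
    (Λ.card : ℝ) ≤ 2 * ((q:ℝ)^2 - (Nat.card (Gr q Λ).ConnectedComponent : ℝ) + 1)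
      - 2 * Real.sqrt ((q:ℝ)^2 - (Nat.card (Gr q Λ).ConnectedComponent : ℝ) + 1) := by
  classical
  haveI : Fintype (Gr q Λ).ConnectedComponent := Fintype.ofFinite _
  haveI hV : Nonempty (Fin 2 → Fin q) := ⟨fun _ => ⟨0, by omega⟩⟩
  haveI : Nonempty (Gr q Λ).ConnectedComponent := ⟨(Gr q Λ).connectedComponentMk Classical.ofNonempty⟩
  set mk : (Fin 2 → Fin q) → (Gr q Λ).ConnectedComponent := (Gr q Λ).connectedComponentMk with hmk
  set SK : (Gr q Λ).ConnectedComponent → Finset (Fin 2 → Fin q) :=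
    fun K => Finset.univ.filter (fun v => mk v = K) with hSK
  set EK : (Gr q Λ).ConnectedComponent → Finset (OEdge q 2) :=
    fun K => Λ.filter (fun e => mk e.1.1 = K) with hEK
  have hend : ∀ e ∈ Λ, mk e.1.2 = mk e.1.1 := by
    intro e he
    have hadj : (Gr q Λ).Adj e.1.1 e.1.2 := ⟨e, he, Or.inl ⟨rfl, rfl⟩⟩
    exact (SimpleGraph.ConnectedComponent.sound hadj.reachable).symm
  have hSKpos : ∀ K, 1 ≤ (SK K).card := by
    intro K
    obtain ⟨v, hv⟩ := K.exists_rep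
    exact Finset.card_pos.mpr ⟨v, Finset.mem_filter.mpr ⟨Finset.mem_univ _, hv⟩⟩
  -- per-component bound
  have hcomp : ∀ K, ((EK K).card : ℝ) ≤
      2 * ((SK K).card : ℝ) - 2 * Real.sqrt ((SK K).card) := by
    intro K
    have hends : ∀ e ∈ EK K, (e : (Fin 2 → Fin q) × (Fin 2 → Fin q)).1 ∈ SK K ∧ e.1.2 ∈ SK K := by
      intro e he
      obtain ⟨heΛ, heK⟩ := Finset.mem_filter.mp he
      refine ⟨Finset.mem_filter.mpr ⟨Finset.mem_univ _, heK⟩,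
        Finset.mem_filter.mpr ⟨Finset.mem_univ _, ?_⟩⟩
      rw [hend e heΛ, heK]
    have hH := dir_count ((EK K).filter (fun e => e.1.1 1 = e.1.2 1)) (SK K) 0 1
      (by decide) ?_
    · have hVt := dir_count ((EK K).filter (fun e => ¬ (e.1.1 1 = e.1.2 1))) (SK K) 1 0
        (by decide) ?_
      · have hsplit := Finset.card_filter_add_card_filter_not
          (s := EK K) (fun e : OEdge q 2 => e.1.1 1 = e.1.2 1)
        have hprod : (SK K).card ≤
            ((SK K).image (fun v => v 1)).card * ((SK K).image (fun v => v 0)).card := by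
          calc (SK K).card
              ≤ (((SK K).image (fun v => v 1)) ×ˢ ((SK K).image (fun v => v 0))).card := by
                apply Finset.card_le_card_of_injOn (fun v => (v 1, v 0))
                · intro v hv
                  exact Finset.mem_product.mpr ⟨Finset.mem_image_of_mem _ hv,
                    Finset.mem_image_of_mem _ hv⟩
                · intro v _ w _ hvw
                  have h1 : v 1 = w 1 := congrArg Prod.fst hvw
                  have h0 : v 0 = w 0 := congrArg Prod.snd hvw
                  exact fin2_eq_of h0 h1
            _ = _ := Finset.card_product _ _
        have hR : 1 ≤ ((SK K).image (fun v => v 1)).card :=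
          Finset.card_pos.mpr (Finset.Nonempty.image (Finset.card_pos.mp (hSKpos K)) _)
        have hC : 1 ≤ ((SK K).image (fun v => v 0)).card :=
          Finset.card_pos.mpr (Finset.Nonempty.image (Finset.card_pos.mp (hSKpos K)) _)
        apply sqrt_pack _ (((SK K).image (fun v => v 1)).card) (((SK K).image (fun v => v 0)).card)
        · exact_mod_cast hR
        · exact_mod_cast hC
        · exact_mod_cast hprod
        · push_cast
          have := hH
          have := hVt
          have : ((EK K).card : ℝ) = (((EK K).filter (fun e => e.1.1 1 = e.1.2 1)).card : ℝ)
              + (((EK K).filter (fun e => ¬ (e.1.1 1 = e.1.2 1))).card : ℝ) := by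
            exact_mod_cast hsplit.symm
          rw [this]
          push_cast
          have hH' : (((EK K).filter (fun e => e.1.1 1 = e.1.2 1)).card : ℝ)
              + (((SK K).image (fun v => v 1)).card : ℝ) ≤ ((SK K).card : ℝ) := by
            exact_mod_cast hH
          have hVt' : (((EK K).filter (fun e => ¬ (e.1.1 1 = e.1.2 1))).card : ℝ)
              + (((SK K).image (fun v => v 0)).card : ℝ) ≤ ((SK K).card : ℝ) := by
            exact_mod_cast hVt
          linarith
      · -- vertical edges hypothesis
        intro e he
        obtain ⟨heEK, hne⟩ := Finset.mem_filter.mp he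
        obtain ⟨h1, h2⟩ := hends e heEK
        rcases edge_cases e with ⟨hj, hi⟩ | ⟨hj, hi⟩
        · exact absurd hj hne
        · exact ⟨h1, h2, hj, hi⟩
    · -- horizontal edges hypothesis
      intro e he
      obtain ⟨heEK, heq⟩ := Finset.mem_filter.mp he
      obtain ⟨h1, h2⟩ := hends e heEK
      rcases edge_cases e with ⟨hj, hi⟩ | ⟨hj, hi⟩
      · exact ⟨h1, h2, hj, hi⟩
      · exfalso
        have : (e.1.1 1 : ℕ) = (e.1.2 1 : ℕ) := by rw [heq]
        omega
  -- sums
  have hedgesum : Λ.card = ∑ K, (EK K).card :=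
    Finset.card_eq_sum_card_fiberwise (fun e _ => Finset.mem_univ (mk e.1.1))
  have hvertsum : (Finset.univ : Finset (Fin 2 → Fin q)).card = ∑ K, (SK K).card :=
    Finset.card_eq_sum_card_fiberwise (fun v _ => Finset.mem_univ (mk v))
  have hcardV : (Finset.univ : Finset (Fin 2 → Fin q)).card = q ^ 2 := by
    simp [Fintype.card_fun]
  have hcc : (Nat.card (Gr q Λ).ConnectedComponent : ℝ)
      = ((Finset.univ : Finset ((Gr q Λ).ConnectedComponent)).card : ℝ) := by
    rw [Nat.card_eq_fintype_card, Finset.card_univ]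
  have hsum := sum_superadd (Finset.univ : Finset ((Gr q Λ).ConnectedComponent))
    Finset.univ_nonempty (fun K => (SK K).card) (fun K _ => hSKpos K)
  have hS : (∑ K, ((SK K).card : ℝ)) = (q : ℝ) ^ 2 := by
    rw [← Nat.cast_sum, ← hvertsum, hcardV]
    push_cast
    ring
  calc (Λ.card : ℝ) = ∑ K, ((EK K).card : ℝ) := by exact_mod_cast hedgesum
    _ ≤ ∑ K, (2 * ((SK K).card : ℝ) - 2 * Real.sqrt ((SK K).card)) :=
        Finset.sum_le_sum (fun K _ => hcomp K)
    _ ≤ 2 * ((∑ K, ((SK K).card : ℝ)) - (Finset.univ : Finset ((Gr q Λ).ConnectedComponent)).card + 1)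
        - 2 * Real.sqrt ((∑ K, ((SK K).card : ℝ)) - (Finset.univ : Finset ((Gr q Λ).ConnectedComponent)).card + 1) := hsum
    _ = _ := by rw [hS, hcc]

lemma card_comp_le (q : ℕ) (hq : 3 ≤ q) (Λ : Finset (OEdge q 2)) :
    Nat.card (Gr q Λ).ConnectedComponent ≤ q ^ 2 := by
  have hsurj : Function.Surjective ((Gr q Λ).connectedComponentMk) :=
    SimpleGraph.ConnectedComponent.ind (fun v => ⟨v, rfl⟩)
  calc Nat.card (Gr q Λ).ConnectedComponent ≤ Nat.card (Fin 2 → Fin q) :=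
        Nat.card_le_card_of_surjective _ hsurj
    _ = q ^ 2 := by simp [Nat.card_eq_fintype_card, Fintype.card_fun]

/-- 2D bound: for `4 < ℓ ≤ p = 2q(q−1)`,
`κ_∇(ℓ) ≤ n − (1/2)(ℓ + √(1 + 2ℓ)) + 1/2` with `n = q²`. -/
theorem stmt_9 (q : ℕ) (hq : 3 ≤ q) (ℓ : ℕ) (hl : 4 < ℓ) (hlp : ℓ ≤ 2 * q * (q - 1)) :
    (kappaGrad q 2 ℓ : ℝ) ≤
      (q : ℝ) ^ 2 - (1 / 2) * ((ℓ : ℝ) + Real.sqrt (1 + 2 * (ℓ : ℝ))) + 1 / 2 := by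
  classical
  -- the right-hand side is nonnegative
  have hq1 : (1:ℝ) ≤ q := by exact_mod_cast le_trans (by norm_num) hq
  have hlR : (ℓ : ℝ) ≤ 2 * (q:ℝ)^2 - 2 * q := by
    have h1 : (ℓ : ℤ) ≤ 2 * (q:ℤ) * ((q:ℤ) - 1) := by
      have := hlp
      zify [show 1 ≤ q from by omega] at this
      exact this
    have h2 : ((ℓ:ℤ) : ℝ) ≤ ((2 * (q:ℤ) * ((q:ℤ) - 1) : ℤ) : ℝ) := by exact_mod_cast h1
    push_cast at h2
    nlinarith
  have hRHS : 0 ≤ (q : ℝ) ^ 2 - (1 / 2) * ((ℓ : ℝ) + Real.sqrt (1 + 2 * (ℓ : ℝ))) + 1 / 2 := by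
    have hs : Real.sqrt (1 + 2 * (ℓ:ℝ)) ≤ 2 * (q:ℝ) - 1 := by
      calc Real.sqrt (1 + 2 * (ℓ:ℝ)) ≤ Real.sqrt ((2 * (q:ℝ) - 1)^2) := by
            apply Real.sqrt_le_sqrt
            nlinarith
        _ = 2 * (q:ℝ) - 1 := Real.sqrt_sq (by linarith)
    linarith
  rcases Finset.eq_empty_or_nonempty
      (Finset.univ.filter (fun Λ : Finset (OEdge q 2) => ℓ ≤ Λ.card)) with hemp | hne
  · rw [kappaGrad, hemp, Finset.sup_empty]
    simpa using hRHS
  · obtain ⟨Λ, hΛmem, hsup⟩ := Finset.exists_mem_eq_sup _ hne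
      (fun Λ => Module.finrank ℝ (Wgrad q 2 Λ))
    rw [kappaGrad, hsup, finrank_Wgrad]
    have hΛcard : ℓ ≤ Λ.card := (Finset.mem_filter.mp hΛmem).2
    set c : ℕ := Nat.card (Gr q Λ).ConnectedComponent with hc
    have hcle : (c : ℝ) ≤ (q:ℝ)^2 := by
      have := card_comp_le q hq Λ
      exact_mod_cast this
    have hchain : (ℓ : ℝ) ≤ 2 * (((q:ℝ)^2 - c) + 1) - 2 * Real.sqrt (((q:ℝ)^2 - c) + 1) := by
      have h1 : (ℓ : ℝ) ≤ (Λ.card : ℝ) := by exact_mod_cast hΛcard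
      have h2 := count_components q hq Λ
      calc (ℓ : ℝ) ≤ (Λ.card : ℝ) := h1
        _ ≤ 2 * ((q:ℝ)^2 - (c:ℝ) + 1) - 2 * Real.sqrt ((q:ℝ)^2 - (c:ℝ) + 1) := h2
        _ = _ := by ring_nf
    have := final_alg ((q:ℝ)^2 - c) ℓ (by linarith) hchain
    linarith
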